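/- Let X be a Banach space and (x_n) a bounded sequence in X such that ‖∑_{j=1}^n α_j x_j‖ ≥ c ∑_{j=1}^n |α_j| for all n and real scalars, where c > 0. Then for every weak* cluster point x** of (x_n) in X** and every x ∈ X, ‖x** − x‖ ≥ c; i.e., d(x**, X) ≥ c. -/

import Mathlib

open Filter Topology NormedSpace Finset

/-- The set of weak* cluster points in the bidual of a sequence `(x k)` in `X`. -/
def weakStarClusterPoints {X : Type*} [NormedAddCommGroup X] [NormedSpace ℝ X]
    (x : ℕ → X) : Set (StrongDual ℝ (StrongDual ℝ X)) :=
  {y | MapClusterPt (StrongDual.toWeakDual y) atTop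
        fun k => StrongDual.toWeakDual (inclusionInDoubleDual ℝ X (x k))}

section Aux

variable {X : Type*} [NormedAddCommGroup X] [NormedSpace ℝ X]

/-- Representation of elements of the convex hull of a tail of `(x k - v)`. -/
lemma statement1_tail_repr (x : ℕ → X) (v : X) (N : ℕ) (w : X)
    (hw : w ∈ convexHull ℝ ((fun k => x k - v) '' {k | N ≤ k})) :
    ∃ (n : ℕ) (lam : ℕ → ℝ), (∀ j, 0 ≤ lam j) ∧ (∀ j, lam j ≠ 0 → N ≤ j ∧ j < n) ∧
      (∑ j ∈ Finset.range n, lam j = 1) ∧ w = ∑ j ∈ Finset.range n, lam j • (x j - v) := by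
  rw [_root_.convexHull_eq] at hw
  obtain ⟨ι, t, wt, z, h0, h1, hz, hcm⟩ := hw
  classical
  have hk : ∀ i ∈ t, ∃ m, N ≤ m ∧ x m - v = z i := by
    intro i hi
    obtain ⟨m, hm, hmz⟩ := hz i hi
    exact ⟨m, hm, hmz⟩
  set k : ι → ℕ := fun i => if h : ∃ m, N ≤ m ∧ x m - v = z i then h.choose else 0 with hkdef
  have hkspec : ∀ i ∈ t, N ≤ k i ∧ x (k i) - v = z i := by
    intro i hi
    have h := hk i hi
    simp only [hkdef, dif_pos h]
    exact h.choose_spec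
  set n : ℕ := t.sup k + 1 with hn
  have hkn : ∀ i ∈ t, k i < n := fun i hi => Nat.lt_succ_of_le (Finset.le_sup hi)
  refine ⟨n, fun m => ∑ i ∈ t.filter (fun i => k i = m), wt i, ?_, ?_, ?_, ?_⟩
  · intro j
    exact Finset.sum_nonneg fun i hi => h0 i (Finset.mem_filter.1 hi).1
  · intro j hj
    have : (t.filter (fun i => k i = j)).Nonempty := by
      by_contra h
      rw [Finset.not_nonempty_iff_eq_empty] at h
      simp [h] at hj
    obtain ⟨i, hi⟩ := this
    obtain ⟨hit, hik⟩ := Finset.mem_filter.1 hi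
    exact ⟨hik ▸ (hkspec i hit).1, hik ▸ hkn i hit⟩
  · rw [Finset.sum_fiberwise_of_maps_to (fun i hi => Finset.mem_range.2 (hkn i hi))]
    exact h1
  · have : w = ∑ i ∈ t, wt i • z i := by
      rw [← hcm, Finset.centerMass_eq_of_sum_1 _ _ h1]
    rw [this, ← Finset.sum_fiberwise_of_maps_to (fun i hi => Finset.mem_range.2 (hkn i hi))
      (fun i => wt i • z i)]
    refine Finset.sum_congr rfl fun j _ => ?_
    rw [Finset.sum_smul]
    refine Finset.sum_congr rfl fun i hi => ?_
    obtain ⟨hit, hik⟩ := Finset.mem_filter.1 hi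
    rw [← hik, (hkspec i hit).2]

/-- Disjointly supported convex combinations are `2c`-separated. -/
lemma statement1_disj_sep (x : ℕ → X) (c : ℝ)
    (hl : ∀ (n : ℕ) (α : ℕ → ℝ),
      c * ∑ j ∈ Finset.range n, |α j| ≤ ‖∑ j ∈ Finset.range n, α j • x j‖)
    (v : X) (n : ℕ) (lam mu : ℕ → ℝ) (hlam0 : ∀ j, 0 ≤ lam j) (hmu0 : ∀ j, 0 ≤ mu j)
    (hlam1 : ∑ j ∈ Finset.range n, lam j = 1) (hmu1 : ∑ j ∈ Finset.range n, mu j = 1)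
    (hdisj : ∀ j, lam j = 0 ∨ mu j = 0) :
    2 * c ≤ ‖(∑ j ∈ Finset.range n, lam j • (x j - v)) -
        (∑ j ∈ Finset.range n, mu j • (x j - v))‖ := by
  have key := hl n (fun j => lam j - mu j)
  have habs : ∀ j, |lam j - mu j| = lam j + mu j := by
    intro j
    rcases hdisj j with h | h <;> rw [h]
    · rw [zero_sub, abs_neg, abs_of_nonneg (hmu0 j), zero_add]
    · rw [sub_zero, abs_of_nonneg (hlam0 j), add_zero]
  have hsum : ∑ j ∈ Finset.range n, |lam j - mu j| = 2 := by
    simp only [habs]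
    rw [Finset.sum_add_distrib, hlam1, hmu1]; norm_num
  rw [hsum] at key
  have hvec : ∑ j ∈ Finset.range n, (lam j - mu j) • x j =
      (∑ j ∈ Finset.range n, lam j • (x j - v)) -
        (∑ j ∈ Finset.range n, mu j • (x j - v)) := by
    have h1 : ∑ j ∈ Finset.range n, lam j • (x j - v)
        = ∑ j ∈ Finset.range n, lam j • x j - v := by
      simp only [smul_sub]
      rw [Finset.sum_sub_distrib, ← Finset.sum_smul, hlam1, one_smul]
    have h2 : ∑ j ∈ Finset.range n, mu j • (x j - v)
        = ∑ j ∈ Finset.range n, mu j • x j - v := by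
      simp only [smul_sub]
      rw [Finset.sum_sub_distrib, ← Finset.sum_smul, hmu1, one_smul]
    rw [h1, h2]
    simp only [sub_smul]
    rw [Finset.sum_sub_distrib]
    abel
  rw [hvec] at key
  linarith [key]

/-- Some tail has all convex combinations of `x k - v` of norm at least `c`. -/
lemma statement1_tail_bound (x : ℕ → X) (c : ℝ)
    (hl : ∀ (n : ℕ) (α : ℕ → ℝ),
      c * ∑ j ∈ Finset.range n, |α j| ≤ ‖∑ j ∈ Finset.range n, α j • x j‖)
    (v : X) :
    ∃ N, ∀ w ∈ convexHull ℝ ((fun k => x k - v) '' {k | N ≤ k}), c ≤ ‖w‖ := by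
  by_contra h
  push_neg at h
  obtain ⟨w₀, hw₀, hw₀n⟩ := h 0
  obtain ⟨n₀, lam, hlam0, hlamsupp, hlam1, hlamrep⟩ := statement1_tail_repr x v 0 w₀ hw₀
  obtain ⟨w₁, hw₁, hw₁n⟩ := h n₀
  obtain ⟨n₁, mu, hmu0, hmusupp, hmu1, hmurep⟩ := statement1_tail_repr x v n₀ w₁ hw₁
  set n := max n₀ n₁ with hn
  have hsub₀ : Finset.range n₀ ⊆ Finset.range n := Finset.range_subset_range.2 (le_max_left _ _)
  have hsub₁ : Finset.range n₁ ⊆ Finset.range n := Finset.range_subset_range.2 (le_max_right _ _)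
  have hlamz : ∀ j ∈ Finset.range n, j ∉ Finset.range n₀ → lam j = 0 := by
    intro j _ hj
    by_contra hne
    exact hj (Finset.mem_range.2 (hlamsupp j hne).2)
  have hmuz : ∀ j ∈ Finset.range n, j ∉ Finset.range n₁ → mu j = 0 := by
    intro j _ hj
    by_contra hne
    exact hj (Finset.mem_range.2 (hmusupp j hne).2)
  have hlam1' : ∑ j ∈ Finset.range n, lam j = 1 := by
    rw [← Finset.sum_subset hsub₀ hlamz]; exact hlam1
  have hmu1' : ∑ j ∈ Finset.range n, mu j = 1 := by
    rw [← Finset.sum_subset hsub₁ hmuz]; exact hmu1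
  have hlamrep' : w₀ = ∑ j ∈ Finset.range n, lam j • (x j - v) := by
    rw [← Finset.sum_subset hsub₀ (fun j hjn hj => by rw [hlamz j hjn hj, zero_smul])]
    exact hlamrep
  have hmurep' : w₁ = ∑ j ∈ Finset.range n, mu j • (x j - v) := by
    rw [← Finset.sum_subset hsub₁ (fun j hjn hj => by rw [hmuz j hjn hj, zero_smul])]
    exact hmurep
  have hdisj : ∀ j, lam j = 0 ∨ mu j = 0 := by
    intro j
    by_contra hcon
    push_neg at hcon
    have h1 := (hlamsupp j hcon.1).2
    have h2 := (hmusupp j hcon.2).1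
    omega
  have key := statement1_disj_sep x c hl v n lam mu hlam0 hmu0 hlam1' hmu1' hdisj
  rw [← hlamrep', ← hmurep'] at key
  have htri : ‖w₀ - w₁‖ ≤ ‖w₀‖ + ‖w₁‖ := norm_sub_le _ _
  linarith

/-- A norm-one functional uniformly at least `c` on a tail of `x k - v`. -/
lemma statement1_sep_functional (x : ℕ → X) (c : ℝ) (hc : 0 < c)
    (hl : ∀ (n : ℕ) (α : ℕ → ℝ),
      c * ∑ j ∈ Finset.range n, |α j| ≤ ‖∑ j ∈ Finset.range n, α j • x j‖)
    (v : X) :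
    ∃ g : StrongDual ℝ X, ‖g‖ ≤ 1 ∧ ∃ N, ∀ k, N ≤ k → c + g v ≤ g (x k) := by
  obtain ⟨N, hN⟩ := statement1_tail_bound x c hl v
  set T := convexHull ℝ ((fun k => x k - v) '' {k | N ≤ k}) with hT
  have hdisj : Disjoint (Metric.ball (0 : X) c) T := by
    rw [Set.disjoint_left]
    intro w hwb hwT
    have h1 : ‖w‖ < c := by simpa [Metric.mem_ball, dist_zero_right] using hwb
    exact absurd (hN w hwT) (not_le.2 h1)
  obtain ⟨f, u, hfu, hft⟩ :=
    geometric_hahn_banach_open (convex_ball (0 : X) c) Metric.isOpen_ball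
      (convex_convexHull ℝ _) hdisj
  have hu0 : 0 < u := by
    have := hfu 0 (by simp [Metric.mem_ball, hc])
    simpa using this
  have hmem : ∀ k, N ≤ k → x k - v ∈ T := fun k hk =>
    subset_convexHull ℝ _ ⟨k, hk, rfl⟩
  have hball : ∀ a : X, ‖a‖ < c → |f a| < u := by
    intro a ha
    have h1 := hfu a (by simpa [Metric.mem_ball, dist_zero_right] using ha)
    have h2 := hfu (-a) (by simpa [Metric.mem_ball, dist_zero_right] using ha)
    rw [map_neg] at h2
    exact abs_lt.2 ⟨by linarith, h1⟩
  -- c * ‖f‖ ≤ u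
  have hcfa : ∀ a : X, c * |f a| ≤ u * ‖a‖ := by
    intro a
    rcases eq_or_ne a 0 with rfl | ha
    · simp
    have hna : 0 < ‖a‖ := norm_pos_iff.2 ha
    have claim : ∀ r : ℝ, 0 < r → r < c → r * |f a| ≤ u * ‖a‖ := by
      intro r hr0 hrc
      have hb : ‖(r / ‖a‖) • a‖ < c := by
        rw [norm_smul, Real.norm_eq_abs, abs_of_pos (by positivity), div_mul_cancel₀ _ hna.ne']
        exact hrc
      have := hball _ hb
      rw [map_smul, smul_eq_mul, abs_mul, abs_of_pos (by positivity)] at this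
      have h2 : r / ‖a‖ * |f a| ≤ u := le_of_lt this
      calc r * |f a| = (r / ‖a‖ * |f a|) * ‖a‖ := by field_simp
        _ ≤ u * ‖a‖ := by nlinarith
    by_contra hcon
    push_neg at hcon
    have hfa0 : 0 < |f a| := by nlinarith [abs_nonneg (f a), mul_pos hu0 hna]
    set r := (u * ‖a‖ / |f a| + c) / 2 with hr
    have hrc : u * ‖a‖ / |f a| < c := by
      rw [div_lt_iff₀ hfa0]; nlinarith
    have hr0 : 0 < r := by positivity
    have hrltc : r < c := by rw [hr]; linarith
    have := claim r hr0 hrltc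
    rw [hr] at this
    have : (u * ‖a‖ / |f a| + c) / 2 * |f a| = (u * ‖a‖ + c * |f a|) / 2 := by
      field_simp
    nlinarith [claim r hr0 hrltc]
  have hfnorm_le : ‖f‖ ≤ u / c := by
    apply f.opNorm_le_bound (by positivity)
    intro a
    rw [Real.norm_eq_abs, div_mul_eq_mul_div, le_div_iff₀ hc]
    nlinarith [hcfa a]
  have hcf : c * ‖f‖ ≤ u := by
    have := mul_le_mul_of_nonneg_left hfnorm_le (le_of_lt hc)
    rwa [mul_div_cancel₀ _ hc.ne'] at this
  have hfN : 0 < f (x N - v) := lt_of_lt_of_le hu0 (hft _ (hmem N le_rfl))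
  have hfne : ‖f‖ ≠ 0 := by
    intro h
    have : f = 0 := f.opNorm_zero_iff.1 h
    rw [this] at hfN
    simp at hfN
  have hfpos : 0 < ‖f‖ := lt_of_le_of_ne (norm_nonneg f) (Ne.symm hfne)
  refine ⟨‖f‖⁻¹ • f, ?_, N, ?_⟩
  · rw [norm_smul, Real.norm_eq_abs, abs_of_pos (by positivity), inv_mul_cancel₀ hfne]
  · intro k hk
    have h1 : u ≤ f (x k - v) := hft _ (hmem k hk)
    have h2 : c * ‖f‖ ≤ f (x k - v) := le_trans hcf h1
    have h3 : c ≤ ‖f‖⁻¹ * f (x k - v) := by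
      rw [inv_mul_eq_div, le_div_iff₀ hfpos]
      linarith
    rw [map_sub] at h3
    simp only [ContinuousLinearMap.smul_apply, smul_eq_mul]
    rw [mul_sub] at h3
    linarith

end Aux

/-- If a bounded sequence `(x_n)` in a Banach space dominates the `ℓ¹` basis
with constant `c > 0`, then every weak* cluster point `x**` of `(x_n)` in `X**` satisfies
`‖x** - x‖ ≥ c` for every `x ∈ X`, i.e. `dist (x**, X) ≥ c`. -/
theorem statement1 {X : Type*} [NormedAddCommGroup X] [NormedSpace ℝ X] [CompleteSpace X]
    (x : ℕ → X) (hb : ∃ M : ℝ, ∀ k, ‖x k‖ ≤ M) (c : ℝ) (hc : 0 < c)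
    (hl : ∀ (n : ℕ) (α : ℕ → ℝ),
      c * ∑ j ∈ Finset.range n, |α j| ≤ ‖∑ j ∈ Finset.range n, α j • x j‖) :
    ∀ y ∈ weakStarClusterPoints x,
      (∀ v : X, c ≤ ‖y - inclusionInDoubleDual ℝ X v‖) ∧
      c ≤ Metric.infDist y (Set.range fun v : X => inclusionInDoubleDual ℝ X v) := by
  intro y hy
  have main : ∀ v : X, c ≤ ‖y - inclusionInDoubleDual ℝ X v‖ := by
    intro v
    obtain ⟨g, hg1, N, hgk⟩ := statement1_sep_functional x c hc hl v
    -- evaluation at g of the cluster point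
    have hy' : MapClusterPt (y g) atTop
        (fun k => (inclusionInDoubleDual ℝ X (x k)) g) := by
      have hcont : Continuous fun φ : WeakDual ℝ (StrongDual ℝ X) => φ g :=
        WeakDual.eval_continuous g
      exact hy.tendsto_comp
        (f := fun φ : WeakDual ℝ (StrongDual ℝ X) => φ g)
        (hcont.tendsto _)
    have hyg : c + g v ≤ y g := by
      by_contra hcon
      push_neg at hcon
      have hnhds : Set.Iio (c + g v) ∈ 𝓝 (y g) := Iio_mem_nhds hcon
      have hfreq := (mapClusterPt_iff_frequently.1 hy') _ hnhds
      obtain ⟨k, hkN, hk⟩ := (Filter.frequently_atTop.1 hfreq) N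
      have hk2 : c + g v ≤ (inclusionInDoubleDual ℝ X (x k)) g := by
        rw [dual_def]
        exact hgk k hkN
      exact absurd hk (not_lt.2 hk2)
    have hle : c ≤ (y - inclusionInDoubleDual ℝ X v) g := by
      rw [ContinuousLinearMap.sub_apply, dual_def]
      linarith
    calc c ≤ (y - inclusionInDoubleDual ℝ X v) g := hle
      _ ≤ ‖(y - inclusionInDoubleDual ℝ X v) g‖ := le_abs_self _
      _ ≤ ‖y - inclusionInDoubleDual ℝ X v‖ * ‖g‖ :=
          (y - inclusionInDoubleDual ℝ X v).le_opNorm g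
      _ ≤ ‖y - inclusionInDoubleDual ℝ X v‖ * 1 :=
          mul_le_mul_of_nonneg_left hg1 (ContinuousLinearMap.opNorm_nonneg _)
      _ = ‖y - inclusionInDoubleDual ℝ X v‖ := mul_one _
  refine ⟨main, ?_⟩
  have hne : Nonempty ↥(Set.range fun v : X => inclusionInDoubleDual ℝ X v) :=
    ⟨⟨_, 0, rfl⟩⟩
  rw [Metric.infDist_eq_iInf]
  apply le_ciInf
  rintro ⟨_, v, rfl⟩
  exact (main v).trans_eq (dist_eq_norm y (inclusionInDoubleDual ℝ X v)).symm
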